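/- For the function f(q) = q⁻¹ defined on ℍ \ {0}, at every q ≠ 0 the left GHR derivatives are ∂f/∂q = −q⁻¹ · Re(q⁻¹) and ∂f/∂q* = 1/(2|q|²). -/

import Mathlib

open scoped Quaternion

noncomputable section

/-- The imaginary unit `i` of the quaternions. -/
def qI : ℍ[ℝ] := ⟨0, 1, 0, 0⟩
/-- The imaginary unit `j` of the quaternions. -/
def qJ : ℍ[ℝ] := ⟨0, 0, 1, 0⟩
/-- The imaginary unit `k` of the quaternions. -/
def qK : ℍ[ℝ] := ⟨0, 0, 0, 1⟩

/-- Left GHR derivative `∂f/∂q^μ` of a quaternion function of a quaternion variable: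
`¼(∂f/∂q_a − (∂f/∂q_b) i^μ − (∂f/∂q_c) j^μ − (∂f/∂q_d) k^μ)`, with `x^μ = μ x μ⁻¹`, the
partials being the real directional (Fréchet) derivatives in directions `1, i, j, k`. -/
def ghrS (μ : ℍ[ℝ]) (f : ℍ[ℝ] → ℍ[ℝ]) (q : ℍ[ℝ]) : ℍ[ℝ] :=
  (1 / 4 : ℝ) • (fderiv ℝ f q 1 - fderiv ℝ f q qI * (μ * qI * μ⁻¹)
    - fderiv ℝ f q qJ * (μ * qJ * μ⁻¹) - fderiv ℝ f q qK * (μ * qK * μ⁻¹))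

/-- Conjugate left GHR derivative `∂f/∂q^{μ*}` of a quaternion function of a quaternion
variable. -/
def ghrSStar (μ : ℍ[ℝ]) (f : ℍ[ℝ] → ℍ[ℝ]) (q : ℍ[ℝ]) : ℍ[ℝ] :=
  (1 / 4 : ℝ) • (fderiv ℝ f q 1 + fderiv ℝ f q qI * (μ * qI * μ⁻¹)
    + fderiv ℝ f q qJ * (μ * qJ * μ⁻¹) + fderiv ℝ f q qK * (μ * qK * μ⁻¹))

lemma qI_re : qI.re = 0 := rfl
lemma qI_imI : qI.imI = 1 := rfl
lemma qI_imJ : qI.imJ = 0 := rfl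
lemma qI_imK : qI.imK = 0 := rfl
lemma qJ_re : qJ.re = 0 := rfl
lemma qJ_imI : qJ.imI = 0 := rfl
lemma qJ_imJ : qJ.imJ = 1 := rfl
lemma qJ_imK : qJ.imK = 0 := rfl
lemma qK_re : qK.re = 0 := rfl
lemma qK_imI : qK.imI = 0 := rfl
lemma qK_imJ : qK.imJ = 0 := rfl
lemma qK_imK : qK.imK = 1 := rfl

/-- **GHR derivatives of `f(q) = q⁻¹`** at `q ≠ 0`:
`∂f/∂q = −q⁻¹ Re(q⁻¹)` and `∂f/∂q* = 1/(2|q|²)`. -/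
theorem ghr_inv (q : ℍ[ℝ]) (hq : q ≠ 0) :
    ghrS (1 : ℍ[ℝ]) (fun p => p⁻¹) q = -(q⁻¹ * ((q⁻¹).re : ℍ[ℝ]))
    ∧ ghrSStar (1 : ℍ[ℝ]) (fun p => p⁻¹) q = ((1 / (2 * ‖q‖ ^ 2) : ℝ) : ℍ[ℝ]) := by
  have hf : ∀ v : ℍ[ℝ], fderiv ℝ (fun p : ℍ[ℝ] => p⁻¹) q v = -(q⁻¹ * v * q⁻¹) := by
    intro v
    rw [show (fun p : ℍ[ℝ] => p⁻¹) = Inv.inv from rfl, fderiv_inv' hq]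
    simp
  set p : ℍ[ℝ] := q⁻¹ with hp
  have h1 : ghrS (1 : ℍ[ℝ]) (fun p : ℍ[ℝ] => p⁻¹) q = -(p * ((p.re : ℝ) : ℍ[ℝ])) := by
    rw [ghrS, hf, hf, hf, hf]
    have : ∀ x : ℍ[ℝ], (1 : ℍ[ℝ]) * x * (1 : ℍ[ℝ])⁻¹ = x := by intro x; simp
    rw [this, this, this]
    ext <;> simp [qI_re, qI_imI, qI_imJ, qI_imK, qJ_re, qJ_imI, qJ_imJ, qJ_imK, qK_re, qK_imI, qK_imJ, qK_imK] <;> ring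
  have h2 : ghrSStar (1 : ℍ[ℝ]) (fun p : ℍ[ℝ] => p⁻¹) q
      = ((Quaternion.normSq p / 2 : ℝ) : ℍ[ℝ]) := by
    rw [ghrSStar, hf, hf, hf, hf]
    have : ∀ x : ℍ[ℝ], (1 : ℍ[ℝ]) * x * (1 : ℍ[ℝ])⁻¹ = x := by intro x; simp
    rw [this, this, this]
    have key : (1 / 4 : ℝ) • (-(p * 1 * p) + -(p * qI * p) * qI + -(p * qJ * p) * qJ
        + -(p * qK * p) * qK) = (1 / 2 : ℝ) • (p * star p) := by
      ext <;> simp [qI_re, qI_imI, qI_imJ, qI_imK, qJ_re, qJ_imI, qJ_imJ, qJ_imK, qK_re, qK_imI, qK_imJ, qK_imK] <;> ring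
    rw [key, Quaternion.self_mul_star, Quaternion.smul_coe]
    norm_num [div_eq_inv_mul]
  refine ⟨h1, h2.trans ?_⟩
  congr 1
  rw [hp, Quaternion.normSq_inv, Quaternion.normSq_eq_norm_mul_self]
  field_simp
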